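/- Let n*, p*, n̄, p̄ > 0 satisfy n̄ − n* = p̄ − p*. Then n*·λ_B(n̄/n*) + p*·λ_B(p̄/p*) ≤ C₀·(√(n̄p̄/(n*p*)) − 1)², where λ_B(ν) = ν·log ν − ν + 1 and C₀ = C₁·(p* + (p*)²/n* + 2n*/max{p̄/p*, n̄/n*}) with C₁ = 2·max{1 + |log(n̄/n*)|, 1 + |log(p̄/p*)|}, provided n̄/n* ≥ 1/4 and p̄/p* ≥ 1/4. -/

import Mathlib

set_option maxHeartbeats 1000000

/-- The Boltzmann function. -/
noncomputable def lamB (ν : ℝ) : ℝ := ν * Real.log ν - ν + 1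


/-- For `1 ≤ x`, `2 log x ≤ x - 1/x`. -/
lemma two_log_le {x : ℝ} (hx : 1 ≤ x) : 2 * Real.log x ≤ x - 1/x := by
  set f : ℝ → ℝ := fun t => t - 1/t - 2 * Real.log t with hf
  have hmono : MonotoneOn f (Set.Icc 1 x) := by
    have hc : ContinuousOn f (Set.Icc 1 x) := by
      apply ContinuousOn.sub
      · apply ContinuousOn.sub continuousOn_id
        exact continuousOn_const.div continuousOn_id
          (fun t ht => by have := ht.1; positivity)
      · exact continuousOn_const.mul
          (Real.continuousOn_log.mono (fun t ht => by
            have h1 := ht.1; simp only [Set.mem_compl_iff, Set.mem_singleton_iff]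
            exact ne_of_gt (by linarith)))
    have hd : ∀ t ∈ interior (Set.Icc 1 x), HasDerivAt f (1 - (-(t^2)⁻¹) - 2 * t⁻¹) t := by
      intro t ht
      rw [interior_Icc] at ht
      have ht0 : t ≠ 0 := by have := ht.1; positivity
      have h1 : HasDerivAt (fun t : ℝ => t - 1/t) (1 - (-(t^2)⁻¹)) t := by
        simpa [one_div, Pi.sub_def] using (hasDerivAt_id' t).sub (hasDerivAt_inv ht0)
      exact h1.sub ((Real.hasDerivAt_log ht0).const_mul 2)
    apply monotoneOn_of_deriv_nonneg (convex_Icc 1 x) hc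
    · intro t ht
      exact (hd t (by rwa [interior_Icc] at ht ⊢)).differentiableAt.differentiableWithinAt
    · intro t ht
      rw [(hd t ht).deriv]
      rw [interior_Icc] at ht
      have ht1 : (1:ℝ) < t := ht.1
      have ht0 : (0:ℝ) < t := by linarith
      have h2 : (0:ℝ) ≤ (1 - t⁻¹)^2 := sq_nonneg _
      have e : (1 - t⁻¹)^2 = 1 - (-(t^2)⁻¹) - 2 * t⁻¹ := by
        field_simp
        ring
      linarith [e ▸ h2]
  have h := hmono (Set.left_mem_Icc.2 hx) (Set.right_mem_Icc.2 hx) hx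
  have hx0 : (0:ℝ) < x := by linarith
  simp only [hf, Real.log_one] at h
  norm_num [one_div] at h
  rw [one_div]
  linarith

/-- For `0 < x ≤ 1`, `log x ≤ (x-1) - (x-1)²/2`. -/
lemma log_le_quad {x : ℝ} (hx0 : 0 < x) (hx1 : x ≤ 1) :
    Real.log x ≤ (x - 1) - (x - 1)^2 / 2 := by
  set g : ℝ → ℝ := fun t => (t - 1) - (t - 1)^2/2 - Real.log t with hg
  have hanti : AntitoneOn g (Set.Icc x 1) := by
    have hc : ContinuousOn g (Set.Icc x 1) := by
      apply ContinuousOn.sub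
      · fun_prop
      · exact Real.continuousOn_log.mono (fun t ht => by
          have h1 := ht.1; simp only [Set.mem_compl_iff, Set.mem_singleton_iff]
          exact ne_of_gt (by linarith))
    have hd : ∀ t ∈ interior (Set.Icc x 1), HasDerivAt g (1 - (2*(t-1)^1*1)/2 - t⁻¹) t := by
      intro t ht
      rw [interior_Icc] at ht
      have ht0 : t ≠ 0 := ne_of_gt (lt_trans hx0 ht.1)
      have h1 : HasDerivAt (fun t : ℝ => (t - 1) - (t-1)^2/2) (1 - (2*(t-1)^1*1)/2) t :=
        ((hasDerivAt_id t).sub_const 1).sub ((((hasDerivAt_id t).sub_const 1).pow 2).div_const 2)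
      exact h1.sub (Real.hasDerivAt_log ht0)
    apply antitoneOn_of_deriv_nonpos (convex_Icc x 1) hc
    · intro t ht
      exact (hd t (by rwa [interior_Icc] at ht ⊢)).differentiableAt.differentiableWithinAt
    · intro t ht
      rw [(hd t ht).deriv]
      rw [interior_Icc] at ht
      have ht0 : (0:ℝ) < t := lt_trans hx0 ht.1
      have h2 : (0:ℝ) ≤ (t - 1)^2 / t := by positivity
      have e : (t-1)^2 / t = -(1 - (2*(t-1)^1*1)/2 - t⁻¹) := by
        field_simp
        ring
      linarith [e ▸ h2]
  have h := hanti (Set.left_mem_Icc.2 hx1) (Set.right_mem_Icc.2 hx1) hx1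
  simp only [hg, Real.log_one] at h
  norm_num at h
  linarith

lemma lamB_pointwise {ν : ℝ} (hν : 0 < ν) :
    lamB ν ≤ 2 * (1 + |Real.log ν|) * (Real.sqrt ν - 1)^2 := by
  set s := Real.sqrt ν with hs
  have hs0 : 0 < s := Real.sqrt_pos.mpr hν
  have hs2 : s^2 = ν := Real.sq_sqrt hν.le
  have hlog : Real.log ν = 2 * Real.log s := by
    rw [← hs2, Real.log_pow]; push_cast; ring
  rw [lamB, hlog, ← hs2]
  set L := Real.log s with hL
  rcases le_or_gt 1 s with h1 | h1
  · have hL0 : 0 ≤ L := Real.log_nonneg h1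
    have habs : |2 * L| = 2 * L := abs_of_nonneg (by linarith)
    rw [habs]
    have key := two_log_le h1
    have hA : 2 * L * s ≤ s^2 - 1 := by
      have hx0 : (0:ℝ) < s := hs0
      have := mul_le_mul_of_nonneg_right key hx0.le
      rw [sub_mul, one_div, inv_mul_cancel₀ (ne_of_gt hx0)] at this
      calc 2 * L * s = 2 * Real.log s * s := by rw [hL]
        _ ≤ s * s - 1 := this
        _ = s^2 - 1 := by ring
    nlinarith [mul_nonneg (by linarith : (0:ℝ) ≤ 2*s-1) (by linarith : (0:ℝ) ≤ s^2-1-2*L*s),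
      mul_nonneg (mul_nonneg (by linarith : (0:ℝ) ≤ s-1) (by linarith : (0:ℝ) ≤ s-1)) (by linarith : (0:ℝ) ≤ s-1),
      mul_nonneg hL0 (sq_nonneg (s-1)), hs0]
  · have hL0 : L ≤ 0 := Real.log_nonpos hs0.le h1.le
    have habs : |2 * L| = -(2 * L) := abs_of_nonpos (by linarith)
    rw [habs]
    have key := log_le_quad hs0 h1.le
    have hB : 2 * L ≤ (s - 1) * (3 - s) := by
      have : L ≤ (s - 1) - (s-1)^2/2 := key
      nlinarith
    nlinarith [mul_nonneg (by nlinarith [sq_nonneg (s-1)] : (0:ℝ) ≤ 3*s^2-4*s+2)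
        (by linarith : (0:ℝ) ≤ (s-1)*(3-s) - 2*L),
      mul_nonneg (mul_nonneg (mul_nonneg (by linarith : (0:ℝ) ≤ 1-s) (by linarith : (0:ℝ) ≤ 1-s)) (by linarith : (0:ℝ) ≤ 1-s)) (by linarith : (0:ℝ) ≤ 7-3*s),
      hs0.le]


lemma core_ineq (ns ps a b : ℝ) (hns : 0 < ns) (hps : 0 < ps)
    (ha0 : 0 < a) (hb0 : 0 < b)
    (hcons : ns * (a^2 - 1) = ps * (b^2 - 1)) :
    ns*(a-1)^2 + ps*(b-1)^2
      ≤ (ps + ps^2/ns + 2*ns/(max (b^2) (a^2))) * (a*b-1)^2 := by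
  set m := max (b^2) (a^2) with hm
  have hm0 : 0 < m := lt_max_of_lt_left (by positivity)
  have hX : (0:ℝ) ≤ (a*b-1)^2 := sq_nonneg _
  have expand : (ps + ps^2/ns + 2*ns/m)*(a*b-1)^2
      = ps*(a*b-1)^2 + ps^2/ns*(a*b-1)^2 + 2*ns/m*(a*b-1)^2 := by ring
  rw [expand]
  rcases le_or_gt 1 a with h1a | h1a
  · -- a ≥ 1, hence b ≥ 1
    have ha2 : 1 ≤ a^2 := by nlinarith
    have hb2 : 1 ≤ b^2 := by nlinarith
    have h1b : 1 ≤ b := by nlinarith [hb0]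
    have hab1 : 0 ≤ a*b - 1 := by nlinarith
    have t2 : ps*(b-1)^2 ≤ ps*(a*b-1)^2 := by
      have : (b-1)^2 ≤ (a*b-1)^2 := by
        nlinarith [mul_nonneg (mul_nonneg hb0.le (by linarith : (0:ℝ) ≤ a-1))
          (by nlinarith : (0:ℝ) ≤ a*b + b - 2)]
      exact mul_le_mul_of_nonneg_left this hps.le
    rcases le_total a b with hab | hab
    · -- max = b^2
      have hmb : m = b^2 := max_eq_left (by nlinarith)
      have t1 : ns*(a-1)^2 ≤ 2*ns/m * (a*b-1)^2 := by
        rw [hmb, div_mul_eq_mul_div, le_div_iff₀ (by positivity)]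
        have h : (a-1)*b ≤ a*b - 1 := by nlinarith
        have h2 : ((a-1)*b)^2 ≤ (a*b-1)^2 := by
          have hnn : 0 ≤ (a-1)*b := by nlinarith
          rw [sq, sq]; exact mul_self_le_mul_self hnn h
        nlinarith [h2, hns.le]
      have t3 : (0:ℝ) ≤ ps^2/ns * (a*b-1)^2 := by positivity
      linarith
    · -- b ≤ a, max = a^2
      have t1 : ns*(a-1)^2 ≤ ps^2/ns * (a*b-1)^2 := by
        rw [div_mul_eq_mul_div, le_div_iff₀ hns]
        have hb2' : (0:ℝ) ≤ b^2 - 1 := by linarith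
        have s1 : b^2 - 1 ≤ a*b - 1 := by
          nlinarith [mul_le_mul_of_nonneg_right hab hb0.le]
        have s2 : a*b - 1 ≤ (a*b-1)*(a+1) := by
          nlinarith [mul_nonneg hab1 ha0.le]
        have h2 : b^2 - 1 ≤ (a*b-1)*(a+1) := s1.trans s2
        have h3 : (b^2-1)^2 ≤ ((a*b-1)*(a+1))^2 := pow_le_pow_left₀ hb2' h2 2
        have e1 : (ns*(a^2-1))^2 = (ps*(b^2-1))^2 := by rw [hcons]
        have hA2 : (0:ℝ) < (a+1)^2 := by positivity
        have e3 : (ns*(a-1)^2*ns)*(a+1)^2 ≤ (ps^2*(a*b-1)^2)*(a+1)^2 := by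
          calc (ns*(a-1)^2*ns)*(a+1)^2 = (ns*(a^2-1))^2 := by ring
            _ = (ps*(b^2-1))^2 := e1
            _ = ps^2*(b^2-1)^2 := by ring
            _ ≤ ps^2*((a*b-1)*(a+1))^2 := mul_le_mul_of_nonneg_left h3 (sq_nonneg ps)
            _ = (ps^2*(a*b-1)^2)*(a+1)^2 := by ring
        exact le_of_mul_le_mul_right e3 hA2
      have t3 : (0:ℝ) ≤ 2*ns/m * (a*b-1)^2 := by positivity
      linarith
  · -- a < 1, hence b < 1
    have ha2 : a^2 < 1 := by nlinarith
    have hb2lt : b^2 < 1 := by nlinarith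
    have h1b : b < 1 := by nlinarith [hb2lt, hb0]
    have hm1 : m ≤ 1 := max_le (by nlinarith) (by nlinarith)
    have hab1 : a*b ≤ 1 := by nlinarith
    have t1 : ns*(a-1)^2 ≤ ns*(a*b-1)^2 := by
      have : (a-1)^2 ≤ (a*b-1)^2 := by
        nlinarith [mul_nonneg (mul_nonneg ha0.le (by linarith : (0:ℝ) ≤ 1-b))
          (by nlinarith : (0:ℝ) ≤ 2 - a*b - a)]
      exact mul_le_mul_of_nonneg_left this hns.le
    have t2 : ps*(b-1)^2 ≤ ps*(a*b-1)^2 := by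
      have : (b-1)^2 ≤ (a*b-1)^2 := by
        nlinarith [mul_nonneg (mul_nonneg hb0.le (by linarith : (0:ℝ) ≤ 1-a))
          (by nlinarith : (0:ℝ) ≤ 2 - a*b - b)]
      exact mul_le_mul_of_nonneg_left this hps.le
    have t1' : ns*(a*b-1)^2 ≤ 2*ns/m * (a*b-1)^2 := by
      apply mul_le_mul_of_nonneg_right _ hX
      rw [le_div_iff₀ hm0]
      nlinarith
    have t3 : (0:ℝ) ≤ ps^2/ns * (a*b-1)^2 := by positivity
    linarith

/-- If `n̄ − n* = p̄ − p*` and `n̄/n* ≥ 1/4`, `p̄/p* ≥ 1/4`, then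
`n* λ_B(n̄/n*) + p* λ_B(p̄/p*) ≤ C₀ (√(n̄p̄/(n*p*)) − 1)²` with
`C₀ = C₁ (p* + (p*)²/n* + 2n*/max{p̄/p*, n̄/n*})` and
`C₁ = 2 max{1 + |log(n̄/n*)|, 1 + |log(p̄/p*)|}`. -/
theorem entropy_averages_estimate (ns ps nb pb : ℝ)
    (hns : 0 < ns) (hps : 0 < ps) (hnb : 0 < nb) (hpb : 0 < pb)
    (hcons : nb - ns = pb - ps)
    (hn4 : 1 / 4 ≤ nb / ns) (hp4 : 1 / 4 ≤ pb / ps) :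
    ns * lamB (nb / ns) + ps * lamB (pb / ps)
      ≤ (2 * max (1 + |Real.log (nb / ns)|) (1 + |Real.log (pb / ps)|))
          * (ps + ps ^ 2 / ns + 2 * ns / max (pb / ps) (nb / ns))
          * (Real.sqrt (nb * pb / (ns * ps)) - 1) ^ 2 := by
  have hν : 0 < nb / ns := div_pos hnb hns
  have hπ : 0 < pb / ps := div_pos hpb hps
  set a := Real.sqrt (nb / ns) with hadef
  set b := Real.sqrt (pb / ps) with hbdef
  have ha0 : 0 < a := Real.sqrt_pos.mpr hν
  have hb0 : 0 < b := Real.sqrt_pos.mpr hπ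
  have ha2 : a^2 = nb / ns := Real.sq_sqrt hν.le
  have hb2 : b^2 = pb / ps := Real.sq_sqrt hπ.le
  -- sqrt of product
  have hsqrtprod : Real.sqrt (nb * pb / (ns * ps)) = a * b := by
    rw [hadef, hbdef, ← Real.sqrt_mul hν.le, div_mul_div_comm]
  -- constraint in a, b form
  have hcons' : ns * (a^2 - 1) = ps * (b^2 - 1) := by
    rw [ha2, hb2]
    field_simp
    linarith [hcons]
  set M := 2 * max (1 + |Real.log (nb / ns)|) (1 + |Real.log (pb / ps)|) with hM
  have hM0 : 0 ≤ M := by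
    have : (0:ℝ) ≤ 1 + |Real.log (nb / ns)| := by positivity
    have h2 := le_max_left (1 + |Real.log (nb / ns)|) (1 + |Real.log (pb / ps)|)
    rw [hM]; linarith
  have hpw1 : lamB (nb / ns) ≤ M * (a - 1)^2 := by
    calc lamB (nb / ns) ≤ 2 * (1 + |Real.log (nb / ns)|) * (a - 1)^2 :=
          lamB_pointwise hν
      _ ≤ M * (a - 1)^2 := by
          apply mul_le_mul_of_nonneg_right _ (sq_nonneg _)
          rw [hM]
          have := le_max_left (1 + |Real.log (nb / ns)|) (1 + |Real.log (pb / ps)|)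
          linarith
  have hpw2 : lamB (pb / ps) ≤ M * (b - 1)^2 := by
    calc lamB (pb / ps) ≤ 2 * (1 + |Real.log (pb / ps)|) * (b - 1)^2 :=
          lamB_pointwise hπ
      _ ≤ M * (b - 1)^2 := by
          apply mul_le_mul_of_nonneg_right _ (sq_nonneg _)
          rw [hM]
          have := le_max_right (1 + |Real.log (nb / ns)|) (1 + |Real.log (pb / ps)|)
          linarith
  have hmax : max (pb / ps) (nb / ns) = max (b^2) (a^2) := by rw [ha2, hb2]
  have hcore := core_ineq ns ps a b hns hps ha0 hb0 hcons'
  have step1 : ns * lamB (nb / ns) + ps * lamB (pb / ps)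
      ≤ M * (ns*(a-1)^2 + ps*(b-1)^2) := by
    have u1 := mul_le_mul_of_nonneg_left hpw1 hns.le
    have u2 := mul_le_mul_of_nonneg_left hpw2 hps.le
    nlinarith [u1, u2]
  have step2 : M * (ns*(a-1)^2 + ps*(b-1)^2)
      ≤ M * ((ps + ps^2/ns + 2*ns/(max (b^2) (a^2))) * (a*b-1)^2) :=
    mul_le_mul_of_nonneg_left hcore hM0
  rw [hsqrtprod, hmax]
  calc ns * lamB (nb / ns) + ps * lamB (pb / ps)
      ≤ M * ((ps + ps^2/ns + 2*ns/(max (b^2) (a^2))) * (a*b-1)^2) :=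
        le_trans step1 step2
    _ = M * (ps + ps ^ 2 / ns + 2 * ns / max (b^2) (a^2)) * (a * b - 1) ^ 2 := by
        ring
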